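/- Let A, B, D and Â, B̂, D̂ be matrices in GL_d(ℝ), each having d distinct positive eigenvalues, with eigendata as in the context. Assume: (1) λ_i(A) = λ_i(Â), λ_i(B) = λ_i(B̂), λ_i(D) = λ_i(D̂) for all i = 1, …, d; (2) for every ordered pair (X, Y) taken from {A, B, D} with X ≠ Y, and likewise for every ordered pair from {Â, B̂, D̂}, one has ⟨e^i(X), e_j(Y)⟩ ≠ 0 for all i, j; and (3) for all i, j, k ∈ {1, …, d}, Tr(p_i(A) p_j(B) p_k(D)) / Tr(p_j(B) p_k(D)) = Tr(p_i(Â) p_j(B̂) p_k(D̂)) / Tr(p_j(B̂) p_k(D̂)) (the denominators being nonzero by (2)). Then there exists C ∈ GL_d(ℝ) such that Â = C A C⁻¹, B̂ = C B C⁻¹, and D̂ = C D C⁻¹. -/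

import Mathlib

open Matrix

/-- The projection `p_i` onto the line spanned by the `i`-th basis vector of `ε`,
along the span of the other basis vectors: `p_i v = ⟨e^i, v⟩ e_i`, as a matrix in the
standard basis. -/
noncomputable def projMat {d : ℕ} (ε : Module.Basis (Fin d) ℝ (Fin d → ℝ)) (i : Fin d) :
    Matrix (Fin d) (Fin d) ℝ :=
  Matrix.of fun k l => ε.coord i (Pi.single l 1) * ε i k

/-- All the pairings `⟨e^i, f_j⟩` of the dual basis of `ε` against the basis `η`
are nonzero. -/
def PairingsNonzero {d : ℕ} (ε η : Module.Basis (Fin d) ℝ (Fin d → ℝ)) : Prop :=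
  ∀ i j : Fin d, ε.coord i (η j) ≠ 0

section Aux

variable {d : ℕ}

lemma coord_sum (f : (Fin d → ℝ) →ₗ[ℝ] ℝ) (v : Fin d → ℝ) :
    ∑ l, f (Pi.single l 1) * v l = f v := by
  conv_rhs => rw [← Finset.univ_sum_single v]
  rw [map_sum]
  refine Finset.sum_congr rfl fun l _ => ?_
  have : Pi.single l (v l) = v l • (Pi.single l (1:ℝ) : Fin d → ℝ) := by
    rw [← Pi.single_smul, smul_eq_mul, mul_one]
  rw [this, _root_.map_smul, smul_eq_mul, mul_comm]

/-- A rank-one matrix `w ⊗ f`. -/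
noncomputable def rk1 (w : Fin d → ℝ) (f : (Fin d → ℝ) →ₗ[ℝ] ℝ) : Matrix (Fin d) (Fin d) ℝ :=
  Matrix.of fun k l => f (Pi.single l 1) * w k

lemma projMat_eq (ε : Module.Basis (Fin d) ℝ (Fin d → ℝ)) (i : Fin d) :
    projMat ε i = rk1 (ε i) (ε.coord i) := rfl

lemma rk1_mul (w w' : Fin d → ℝ) (f f' : (Fin d → ℝ) →ₗ[ℝ] ℝ) :
    rk1 w f * rk1 w' f' = f w' • rk1 w f' := by
  ext k l
  simp only [Matrix.mul_apply, rk1, Matrix.of_apply, Matrix.smul_apply, smul_eq_mul]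
  calc ∑ m, (f (Pi.single m 1) * w k) * (f' (Pi.single l 1) * w' m)
      = (f' (Pi.single l 1) * w k) * ∑ m, f (Pi.single m 1) * w' m := by
        rw [Finset.mul_sum]; exact Finset.sum_congr rfl fun m _ => by ring
    _ = f w' * (f' (Pi.single l 1) * w k) := by rw [coord_sum]; ring

lemma rk1_trace (w : Fin d → ℝ) (f : (Fin d → ℝ) →ₗ[ℝ] ℝ) : (rk1 w f).trace = f w := by
  simp only [Matrix.trace, Matrix.diag, rk1, Matrix.of_apply]
  exact coord_sum f w

lemma trace_two (η θ : Module.Basis (Fin d) ℝ (Fin d → ℝ)) (j k : Fin d) :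
    (projMat η j * projMat θ k).trace = η.coord j (θ k) * θ.coord k (η j) := by
  rw [projMat_eq, projMat_eq, rk1_mul, Matrix.trace_smul, rk1_trace, smul_eq_mul]

lemma trace_three (ε η θ : Module.Basis (Fin d) ℝ (Fin d → ℝ)) (i j k : Fin d) :
    (projMat ε i * projMat η j * projMat θ k).trace
      = ε.coord i (η j) * (η.coord j (θ k) * θ.coord k (ε i)) := by
  rw [projMat_eq, projMat_eq, projMat_eq, rk1_mul, Matrix.smul_mul, Matrix.trace_smul,
    rk1_mul, Matrix.trace_smul, rk1_trace, smul_eq_mul, smul_eq_mul]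

/-- Two matrices agreeing on a basis (via `mulVec`) are equal. -/
lemma ext_of_basis (M N : Matrix (Fin d) (Fin d) ℝ) (ε : Module.Basis (Fin d) ℝ (Fin d → ℝ))
    (h : ∀ i, M *ᵥ ε i = N *ᵥ ε i) : M = N := by
  apply Matrix.toLin'.injective
  apply ε.ext
  intro i
  rw [Matrix.toLin'_apply, Matrix.toLin'_apply, h i]

lemma toMatrix'_mulVec (f : (Fin d → ℝ) →ₗ[ℝ] (Fin d → ℝ)) (v : Fin d → ℝ) :
    (LinearMap.toMatrix' f) *ᵥ v = f v := by
  rw [← Matrix.toLin'_apply, Matrix.toLin'_toMatrix']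

/-- If `C` maps the eigenbasis of `M` to the eigenbasis of `Mh` (up to nonzero scalars),
and eigenvalues agree, then `C` conjugates `M` to `Mh`. -/
lemma conj_eq (M Mh C Ci : Matrix (Fin d) (Fin d) ℝ) (lam : Fin d → ℝ)
    (η ηh : Module.Basis (Fin d) ℝ (Fin d → ℝ)) (τ : Fin d → ℝ)
    (hM : ∀ j, M *ᵥ η j = lam j • η j) (hMh : ∀ j, Mh *ᵥ ηh j = lam j • ηh j)
    (hC : ∀ j, C *ᵥ η j = τ j • ηh j) (hCi : C * Ci = 1) :
    Mh = C * M * Ci := by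
  have key : C * M = Mh * C := by
    apply ext_of_basis _ _ η
    intro j
    rw [← Matrix.mulVec_mulVec, ← Matrix.mulVec_mulVec, hM j, Matrix.mulVec_smul, hC j,
      Matrix.mulVec_smul, hMh j, smul_comm]
  calc Mh = Mh * (C * Ci) := by rw [hCi, mul_one]
    _ = (Mh * C) * Ci := by rw [mul_assoc]
    _ = C * M * Ci := by rw [key]

end Aux

theorem statement_14 {d : ℕ}
    (A B D Ah Bh Dh : Matrix (Fin d) (Fin d) ℝ)
    (lA lB lD lAh lBh lDh : Fin d → ℝ)
    (eA eB eD eAh eBh eDh : Module.Basis (Fin d) ℝ (Fin d → ℝ))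
    -- each matrix has `d` distinct positive eigenvalues, with the given eigenbasis
    (hlA : StrictAnti lA) (hlApos : ∀ i, 0 < lA i)
    (hlB : StrictAnti lB) (hlBpos : ∀ i, 0 < lB i)
    (hlD : StrictAnti lD) (hlDpos : ∀ i, 0 < lD i)
    (hlAh : StrictAnti lAh) (hlAhpos : ∀ i, 0 < lAh i)
    (hlBh : StrictAnti lBh) (hlBhpos : ∀ i, 0 < lBh i)
    (hlDh : StrictAnti lDh) (hlDhpos : ∀ i, 0 < lDh i)
    (heA : ∀ i, A *ᵥ eA i = lA i • eA i) (heB : ∀ i, B *ᵥ eB i = lB i • eB i)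
    (heD : ∀ i, D *ᵥ eD i = lD i • eD i)
    (heAh : ∀ i, Ah *ᵥ eAh i = lAh i • eAh i) (heBh : ∀ i, Bh *ᵥ eBh i = lBh i • eBh i)
    (heDh : ∀ i, Dh *ᵥ eDh i = lDh i • eDh i)
    -- (1) the eigenvalues agree
    (hA : lA = lAh) (hB : lB = lBh) (hD : lD = lDh)
    -- (2) all pairings of eigenvectors of distinct matrices are nonzero
    (hAB : PairingsNonzero eA eB) (hBA : PairingsNonzero eB eA)
    (hAD : PairingsNonzero eA eD) (hDA : PairingsNonzero eD eA)
    (hBD : PairingsNonzero eB eD) (hDB : PairingsNonzero eD eB)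
    (hABh : PairingsNonzero eAh eBh) (hBAh : PairingsNonzero eBh eAh)
    (hADh : PairingsNonzero eAh eDh) (hDAh : PairingsNonzero eDh eAh)
    (hBDh : PairingsNonzero eBh eDh) (hDBh : PairingsNonzero eDh eBh)
    -- (3) the correlation-function ratios agree
    (hT : ∀ i j k : Fin d,
      (projMat eA i * projMat eB j * projMat eD k).trace /
          (projMat eB j * projMat eD k).trace =
        (projMat eAh i * projMat eBh j * projMat eDh k).trace /
          (projMat eBh j * projMat eDh k).trace) :
    ∃ C : Matrix (Fin d) (Fin d) ℝ, IsUnit C ∧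
      Ah = C * A * C⁻¹ ∧ Bh = C * B * C⁻¹ ∧ Dh = C * D * C⁻¹ := by
  rcases Nat.eq_zero_or_pos d with hd | hd
  · subst hd
    exact ⟨1, isUnit_one, Subsingleton.elim _ _, Subsingleton.elim _ _, Subsingleton.elim _ _⟩
  set i0 : Fin d := ⟨0, hd⟩ with hi0
  -- the cross-multiplied trace identity
  have E : ∀ i j k, eA.coord i (eB j) * eD.coord k (eA i) * eDh.coord k (eBh j)
      = eAh.coord i (eBh j) * eDh.coord k (eAh i) * eD.coord k (eB j) := by
    intro i j k
    have H := hT i j k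
    rw [trace_three, trace_three, trace_two, trace_two] at H
    have h1 := hBD j k; have h2 := hDB k j; have h3 := hBDh j k; have h4 := hDBh k j
    rw [div_eq_div_iff (mul_ne_zero h1 h2) (mul_ne_zero h3 h4)] at H
    apply mul_left_cancel₀ (mul_ne_zero h1 h3)
    linear_combination H
  -- the scaling factors
  set s : Fin d → ℝ := fun i => eD.coord i0 (eA i) / eDh.coord i0 (eAh i) with hs
  set t : Fin d → ℝ := fun j => eA.coord i0 (eB j) * s i0 / eAh.coord i0 (eBh j) with ht
  set r : Fin d → ℝ := fun k => s i0 * eDh.coord k (eAh i0) / eD.coord k (eA i0) with hr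
  have hs0 : ∀ i, s i ≠ 0 := fun i => div_ne_zero (hDA i0 i) (hDAh i0 i)
  have ht0 : ∀ j, t j ≠ 0 := fun j => div_ne_zero (mul_ne_zero (hAB i0 j) (hs0 i0)) (hABh i0 j)
  have hr0 : ∀ k, r k ≠ 0 := fun k => div_ne_zero (mul_ne_zero (hs0 i0) (hDAh k i0)) (hDA k i0)
  -- key identity (I)
  have hI : ∀ i j, eA.coord i (eB j) * s i = t j * eAh.coord i (eBh j) := by
    intro i j
    have key : eA.coord i (eB j) * eD.coord i0 (eA i)
          * (eAh.coord i0 (eBh j) * eDh.coord i0 (eAh i0))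
        = eAh.coord i (eBh j) * eDh.coord i0 (eAh i)
          * (eA.coord i0 (eB j) * eD.coord i0 (eA i0)) := by
      apply mul_left_cancel₀ (hDBh i0 j)
      linear_combination (eAh.coord i0 (eBh j) * eDh.coord i0 (eAh i0)) * E i j i0
        - (eAh.coord i (eBh j) * eDh.coord i0 (eAh i)) * E i0 j i0
    simp only [hs, ht]
    have h1 := hDAh i0 i; have h2 := hABh i0 j; have h3 := hDAh i0 i0
    simp only [Module.Basis.coord_apply] at key h1 h2 h3 ⊢
    field_simp [h1, h2, h3]
    linear_combination key
  -- key identity (II)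
  have hII : ∀ k i, eD.coord k (eA i) * r k = s i * eDh.coord k (eAh i) := by
    intro k i
    have key : eD.coord k (eA i) * eD.coord i0 (eA i0)
          * (eDh.coord k (eAh i0) * eDh.coord i0 (eAh i))
        = eD.coord i0 (eA i) * eDh.coord k (eAh i)
          * (eDh.coord i0 (eAh i0) * eD.coord k (eA i0)) := by
      apply mul_left_cancel₀ (mul_ne_zero (mul_ne_zero (hAB i i0) (hAB i0 i0))
        (mul_ne_zero (hDBh k i0) (hDBh i0 i0)))
      linear_combination
        (eDh.coord k (eAh i0) * eDh.coord i0 (eAh i) * eA.coord i0 (eB i0)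
          * eD.coord i0 (eA i0) * eDh.coord i0 (eBh i0)) * E i i0 k
        + (eDh.coord i0 (eAh i) * eDh.coord k (eAh i0) * eAh.coord i (eBh i0)
          * eDh.coord k (eAh i) * eD.coord k (eB i0)) * E i0 i0 i0
        - (eDh.coord k (eAh i) * eDh.coord i0 (eAh i0) * eA.coord i (eB i0)
          * eD.coord i0 (eA i) * eDh.coord i0 (eBh i0)) * E i0 i0 k
        - (eDh.coord i0 (eAh i0) * eDh.coord k (eAh i) * eAh.coord i0 (eBh i0)
          * eDh.coord k (eAh i0) * eD.coord k (eB i0)) * E i i0 i0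
    simp only [hs, hr]
    have h1 := hDA k i0; have h2 := hDAh i0 i; have h3 := hDAh i0 i0
    have h4 := hDAh k i0
    simp only [Module.Basis.coord_apply] at key h1 h2 h3 h4 ⊢
    field_simp [h1, h2, h3, h4]
    linear_combination key
  -- construct the conjugating matrix
  set f : (Fin d → ℝ) →ₗ[ℝ] (Fin d → ℝ) := eA.constr ℝ (fun i => s i • eAh i) with hf
  set g : (Fin d → ℝ) →ₗ[ℝ] (Fin d → ℝ) := eAh.constr ℝ (fun i => (s i)⁻¹ • eA i) with hg
  set C := LinearMap.toMatrix' f with hCdef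
  set Ci := LinearMap.toMatrix' g with hCidef
  have hfg : f ∘ₗ g = LinearMap.id := by
    apply eAh.ext
    intro i
    rw [LinearMap.comp_apply, hg, Module.Basis.constr_basis, _root_.map_smul, hf, Module.Basis.constr_basis,
      smul_smul, inv_mul_cancel₀ (hs0 i), one_smul, LinearMap.id_apply]
  have hgf : g ∘ₗ f = LinearMap.id := by
    apply eA.ext
    intro i
    rw [LinearMap.comp_apply, hf, Module.Basis.constr_basis, _root_.map_smul, hg, Module.Basis.constr_basis,
      smul_smul, mul_inv_cancel₀ (hs0 i), one_smul, LinearMap.id_apply]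
  have hCCi : C * Ci = 1 := by
    rw [hCdef, hCidef, ← LinearMap.toMatrix'_comp, hfg, LinearMap.toMatrix'_id]
  have hCinv : C⁻¹ = Ci := Matrix.inv_eq_right_inv hCCi
  -- action of C on the three eigenbases
  have hCA : ∀ i, C *ᵥ eA i = s i • eAh i := by
    intro i
    rw [hCdef, toMatrix'_mulVec, hf, Module.Basis.constr_basis]
  have hCB : ∀ j, C *ᵥ eB j = t j • eBh j := by
    intro j
    rw [hCdef, toMatrix'_mulVec]
    conv_lhs => rw [← eA.sum_repr (eB j)]
    rw [map_sum]
    have step : ∀ i ∈ Finset.univ, f (eA.repr (eB j) i • eA i)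
        = t j • (eAh.repr (eBh j) i • eAh i) := by
      intro i _
      rw [_root_.map_smul, hf, Module.Basis.constr_basis, smul_smul, smul_smul]
      congr 1
      have h := hI i j
      rw [Module.Basis.coord_apply, Module.Basis.coord_apply] at h
      exact h
    rw [Finset.sum_congr rfl step, ← Finset.smul_sum, eAh.sum_repr]
  have hff2 : f = eD.constr ℝ (fun k => r k • eDh k) := by
    apply eA.ext
    intro i
    rw [hf, Module.Basis.constr_basis]
    conv_rhs => rw [← eD.sum_repr (eA i)]
    rw [map_sum]
    have step : ∀ k ∈ Finset.univ, (eD.constr ℝ (fun k => r k • eDh k)) (eD.repr (eA i) k • eD k)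
        = s i • (eDh.repr (eAh i) k • eDh k) := by
      intro k _
      rw [_root_.map_smul, Module.Basis.constr_basis, smul_smul, smul_smul]
      congr 1
      have h := hII k i
      rw [Module.Basis.coord_apply, Module.Basis.coord_apply] at h
      exact h
    rw [Finset.sum_congr rfl step, ← Finset.smul_sum, eDh.sum_repr]
  have hCD : ∀ k, C *ᵥ eD k = r k • eDh k := by
    intro k
    rw [hCdef, toMatrix'_mulVec, hff2, Module.Basis.constr_basis]
  -- conclude
  have hCiC : Ci * C = 1 := by
    rw [hCdef, hCidef, ← LinearMap.toMatrix'_comp, hgf, LinearMap.toMatrix'_id]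
  refine ⟨C, ⟨⟨C, Ci, hCCi, hCiC⟩, rfl⟩, ?_, ?_, ?_⟩
  · rw [hCinv]
    exact conj_eq A Ah C Ci lA eA eAh s heA (fun i => by rw [hA]; exact heAh i) hCA hCCi
  · rw [hCinv]
    exact conj_eq B Bh C Ci lB eB eBh t heB (fun i => by rw [hB]; exact heBh i) hCB hCCi
  · rw [hCinv]
    exact conj_eq D Dh C Ci lD eD eDh r heD (fun i => by rw [hD]; exact heDh i) hCD hCCi
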